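/- Let L ⊆ K be number fields, let S be a nonempty finite set of maximal ideals of 𝒪_K, and let β be a function assigning to each maximal ideal ν of 𝒪_K a nonzero element β_ν ∈ L^×. Assume: (i) for every α ∈ K^× with val_𝔭(α) = 0 for all 𝔭 ∈ S, one has N_{K/L}(α) = ∏_{𝔮 ∉ S} β_𝔮^{val_𝔮(α)} (a finite product over the maximal ideals 𝔮 not in S); and (ii) for each 𝔭 ∈ S there exists x_𝔭 ∈ K^× with val_𝔭(x_𝔭) = 1, val_{𝔭'}(x_𝔭) = 0 for every 𝔭' ∈ S with 𝔭' ≠ 𝔭, and β_𝔭 = N_{K/L}(x_𝔭) · ∏_{𝔮 ∉ S} β_𝔮^{−val_𝔮(x_𝔭)}. Then for every α ∈ K^× one has N_{K/L}(α) = ∏_{ν} β_ν^{val_ν(α)}, the (finite) product ranging over all maximal ideals ν of 𝒪_K. -/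

import Mathlib

open NumberField IsDedekindDomain

/-- The normalized `ℤ`-valued valuation of `K` attached to a maximal ideal `ν` of `𝒪_K`
(a maximal ideal of `𝒪_K` is the same thing as a nonzero prime, i.e. an element of the
height-one spectrum), evaluated at a nonzero element `α` of `K`. -/
noncomputable def valZ {K : Type*} [Field K] [NumberField K]
    (ν : HeightOneSpectrum (𝓞 K)) (α : Kˣ) : ℤ :=
  - Multiplicative.toAdd (WithZero.unzero
      (show ν.valuation K (α : K) ≠ 0 from
        fun hz => α.ne_zero ((ν.valuation K).zero_iff.mp hz)))

section aux

variable {K : Type*} [Field K] [NumberField K]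

private lemma coe_ofAdd_neg_valZ (ν : HeightOneSpectrum (𝓞 K)) (α : Kˣ) :
    ((Multiplicative.ofAdd (-(valZ ν α)) : Multiplicative ℤ) : WithZero (Multiplicative ℤ))
      = ν.valuation K (α : K) := by
  unfold valZ
  rw [neg_neg, ofAdd_toAdd, WithZero.coe_unzero]

private lemma valZ_unique {ν : HeightOneSpectrum (𝓞 K)} {α : Kˣ} {m : ℤ}
    (h : ((Multiplicative.ofAdd (-m) : Multiplicative ℤ) : WithZero (Multiplicative ℤ))
      = ν.valuation K (α : K)) : valZ ν α = m := by
  have := h.trans (coe_ofAdd_neg_valZ ν α).symm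
  rw [WithZero.coe_inj] at this
  have := Multiplicative.ofAdd.injective this
  omega

private lemma valZ_mul (ν : HeightOneSpectrum (𝓞 K)) (a b : Kˣ) :
    valZ ν (a * b) = valZ ν a + valZ ν b := by
  apply valZ_unique
  rw [Units.val_mul, map_mul, ← coe_ofAdd_neg_valZ ν a, ← coe_ofAdd_neg_valZ ν b,
    ← WithZero.coe_mul, ← ofAdd_add, neg_add]

private lemma valZ_one (ν : HeightOneSpectrum (𝓞 K)) : valZ ν (1 : Kˣ) = 0 := by
  apply valZ_unique
  simp

private lemma valZ_inv (ν : HeightOneSpectrum (𝓞 K)) (a : Kˣ) :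
    valZ ν a⁻¹ = - valZ ν a := by
  have h := valZ_mul ν a a⁻¹
  rw [mul_inv_cancel, valZ_one] at h
  omega

private lemma valZ_zpow (ν : HeightOneSpectrum (𝓞 K)) (a : Kˣ) (n : ℤ) :
    valZ ν (a ^ n) = n * valZ ν a := by
  apply valZ_unique
  rw [Units.val_zpow_eq_zpow_val, map_zpow₀, ← coe_ofAdd_neg_valZ ν a,
    ← WithZero.coe_zpow, WithZero.coe_inj, ← ofAdd_zsmul, smul_eq_mul, mul_neg]

private lemma valZ_prod {ι : Type*} (ν : HeightOneSpectrum (𝓞 K)) (s : Finset ι) (f : ι → Kˣ) :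
    valZ ν (∏ i ∈ s, f i) = ∑ i ∈ s, valZ ν (f i) := by
  classical
  induction s using Finset.induction_on with
  | empty => simpa using valZ_one ν
  | insert a s h ih => rw [Finset.prod_insert h, Finset.sum_insert h, valZ_mul, ih]

private lemma valZ_eq_zero_iff (ν : HeightOneSpectrum (𝓞 K)) (α : Kˣ) :
    valZ ν α = 0 ↔ ν.valuation K (α : K) = 1 := by
  rw [← coe_ofAdd_neg_valZ ν α, ← WithZero.coe_one, WithZero.coe_inj]
  constructor
  · intro h; rw [h]; simp
  · intro h
    have := congrArg Multiplicative.toAdd h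
    simp at this
    omega

private lemma valZ_support_finite (α : Kˣ) :
    {ν : HeightOneSpectrum (𝓞 K) | valZ ν α ≠ 0}.Finite := by
  obtain ⟨⟨n, d, hd⟩, hk⟩ := IsLocalization.surj (nonZeroDivisors (𝓞 K)) (α : K)
  simp only at hk
  have hd0 : d ≠ 0 := nonZeroDivisors.ne_zero hd
  have hn0 : n ≠ 0 := by
    intro h
    rw [h, map_zero] at hk
    rcases mul_eq_zero.mp hk with h' | h'
    · exact α.ne_zero h'
    · exact hd0 (IsFractionRing.injective (𝓞 K) K (by simpa using h'))
  apply Set.Finite.subset (Set.Finite.union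
    (Ideal.finite_factors (I := Ideal.span {n}) (by simpa [Ideal.span_singleton_eq_bot] using hn0))
    (Ideal.finite_factors (I := Ideal.span {d}) (by simpa [Ideal.span_singleton_eq_bot] using hd0)))
  intro ν hν
  rw [Set.mem_setOf_eq] at hν
  replace hν : ν.valuation K (α : K) ≠ 1 := fun h => hν ((valZ_eq_zero_iff ν α).mpr h)
  have hval : ν.valuation K (α : K) * ν.intValuation d = ν.intValuation n := by
    rw [← ν.valuation_of_algebraMap (K := K), ← ν.valuation_of_algebraMap (K := K), ← map_mul]
    exact congrArg _ hk
  by_contra hc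
  simp only [Set.mem_union, Set.mem_setOf_eq, not_or] at hc
  have h1 : ν.intValuation n = 1 := by
    rcases lt_or_eq_of_le (ν.intValuation_le_one n) with h | h
    · exact absurd ((ν.intValuation_lt_one_iff_dvd n).mp h) hc.1
    · exact h
  have h2 : ν.intValuation d = 1 := by
    rcases lt_or_eq_of_le (ν.intValuation_le_one d) with h | h
    · exact absurd ((ν.intValuation_lt_one_iff_dvd d).mp h) hc.2
    · exact h
  rw [h1, h2, mul_one] at hval
  exact hν hval

private lemma finprod_zpow_eq_prod {ι M : Type*} [Field M] (T : Finset ι) (β : ι → M) (e : ι → ℤ)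
    (he : ∀ i, e i ≠ 0 → i ∈ T) :
    ∏ᶠ i, β i ^ e i = ∏ i ∈ T, β i ^ e i := by
  apply finprod_eq_prod_of_mulSupport_subset
  intro i hi
  by_contra h
  have he0 : e i = 0 := by by_contra h'; exact h (he i h')
  rw [Function.mem_mulSupport, he0, zpow_zero] at hi
  exact hi rfl

private lemma finprod_cond_zpow_eq_prod {ι M : Type*} [Field M] [DecidableEq ι]
    (S T : Finset ι) (β : ι → M) (e : ι → ℤ) (he : ∀ i, e i ≠ 0 → i ∈ T) :
    (∏ᶠ (i) (_ : i ∉ S), β i ^ e i) = ∏ i ∈ T \ S, β i ^ e i := by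
  have h0 : (∏ᶠ (i) (_ : i ∉ S), β i ^ e i)
      = ∏ᶠ (i) (_ : i ∈ {j | j ∉ S}), β i ^ e i := rfl
  rw [h0, finprod_mem_eq_prod_of_inter_mulSupport_eq]
  ext i
  simp only [Set.mem_inter_iff, Set.mem_setOf_eq, Finset.coe_sdiff, Set.mem_diff,
    Finset.mem_coe, Function.mem_mulSupport]
  constructor
  · rintro ⟨hiS, hne⟩
    have : e i ≠ 0 := fun h => hne (by rw [h, zpow_zero])
    exact ⟨⟨he i this, hiS⟩, hne⟩
  · tauto

private lemma zpow_sum₀ {M ι : Type*} [Field M] {x : M} (hx : x ≠ 0) (s : Finset ι) (e : ι → ℤ) :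
    x ^ (∑ i ∈ s, e i) = ∏ i ∈ s, x ^ e i := by
  classical
  induction s using Finset.induction_on with
  | empty => simp
  | insert a s h ih => rw [Finset.sum_insert h, Finset.prod_insert h, zpow_add₀ hx, ih]

private lemma prod_zpow₀ {M ι : Type*} [Field M] (s : Finset ι) (f : ι → M) (n : ℤ) :
    (∏ i ∈ s, f i) ^ n = ∏ i ∈ s, f i ^ n := by
  classical
  induction s using Finset.induction_on with
  | empty => simp
  | insert a s h ih => rw [Finset.prod_insert h, Finset.prod_insert h, mul_zpow, ih]

end aux

/-- Let `L ⊆ K` be number fields, `S` a nonempty finite set of maximal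
ideals of `𝒪_K` and `β` a function assigning to each maximal ideal `ν` of `𝒪_K` a nonzero
element `β_ν ∈ Lˣ`. Assume:
(i) for every `α ∈ Kˣ` with `val_𝔭(α) = 0` for all `𝔭 ∈ S`,
    `N_{K/L}(α) = ∏_{𝔮 ∉ S} β_𝔮 ^ val_𝔮(α)`;
(ii) for each `𝔭 ∈ S` there is `x_𝔭 ∈ Kˣ` with `val_𝔭(x_𝔭) = 1`, `val_{𝔭'}(x_𝔭) = 0` for all
    `𝔭' ∈ S`, `𝔭' ≠ 𝔭`, and `β_𝔭 = N_{K/L}(x_𝔭) · ∏_{𝔮 ∉ S} β_𝔮 ^ (-val_𝔮(x_𝔭))`.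
Then for every `α ∈ Kˣ`, `N_{K/L}(α) = ∏_ν β_ν ^ val_ν(α)` (products over maximal ideals of
`𝒪_K`, all of them having finitely many factors `≠ 1`). -/
theorem norm_eq_finprod_of_local_data (K L : Type*) [Field K] [Field L]
    [NumberField K] [NumberField L] [Algebra L K]
    (S : Finset (HeightOneSpectrum (𝓞 K))) (hS : S.Nonempty)
    (β : HeightOneSpectrum (𝓞 K) → L) (hβ : ∀ ν, β ν ≠ 0)
    (h1 : ∀ α : Kˣ, (∀ 𝔭 ∈ S, valZ 𝔭 α = 0) →
      Algebra.norm L (α : K) =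
        ∏ᶠ (𝔮 : HeightOneSpectrum (𝓞 K)) (_ : 𝔮 ∉ S), β 𝔮 ^ valZ 𝔮 α)
    (h2 : ∀ 𝔭 ∈ S, ∃ x : Kˣ, valZ 𝔭 x = 1 ∧
      (∀ 𝔭' ∈ S, 𝔭' ≠ 𝔭 → valZ 𝔭' x = 0) ∧
      β 𝔭 = Algebra.norm L (x : K) *
        ∏ᶠ (𝔮 : HeightOneSpectrum (𝓞 K)) (_ : 𝔮 ∉ S), β 𝔮 ^ (-(valZ 𝔮 x)))
    (α : Kˣ) :
    Algebra.norm L (α : K) = ∏ᶠ ν : HeightOneSpectrum (𝓞 K), β ν ^ valZ ν α := by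
  classical
  choose x hx1 hx2 hx3 using h2
  set w : Kˣ := ∏ 𝔭 ∈ S.attach, x 𝔭.1 𝔭.2 ^ valZ 𝔭.1 α with hw
  set γ : Kˣ := α * w⁻¹ with hγdef
  -- the valuation of γ
  have hvalγ : ∀ ν, valZ ν γ
      = valZ ν α - ∑ 𝔭 ∈ S.attach, valZ 𝔭.1 α * valZ ν (x 𝔭.1 𝔭.2) := by
    intro ν
    rw [hγdef, valZ_mul, valZ_inv, hw, valZ_prod]
    have : ∀ 𝔭 ∈ S.attach, valZ ν (x 𝔭.1 𝔭.2 ^ valZ 𝔭.1 α)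
        = valZ 𝔭.1 α * valZ ν (x 𝔭.1 𝔭.2) := fun 𝔭 _ => valZ_zpow ν _ _
    rw [Finset.sum_congr rfl this]
    ring
  have hγS : ∀ 𝔭 ∈ S, valZ 𝔭 γ = 0 := by
    intro 𝔭 h𝔭
    rw [hvalγ]
    have hsum : ∑ 𝔮 ∈ S.attach, valZ 𝔮.1 α * valZ 𝔭 (x 𝔮.1 𝔮.2) = valZ 𝔭 α := by
      rw [Finset.sum_eq_single_of_mem ⟨𝔭, h𝔭⟩ (Finset.mem_attach _ _)]
      · rw [hx1 𝔭 h𝔭, mul_one]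
      · intro 𝔮 _ hne
        rw [hx2 𝔮.1 𝔮.2 𝔭 h𝔭 (fun h => hne (Subtype.ext h.symm)), mul_zero]
    omega
  -- a big common finite index set
  set T : Finset (HeightOneSpectrum (𝓞 K)) :=
    ((S ∪ (valZ_support_finite α).toFinset) ∪ (valZ_support_finite γ).toFinset)
      ∪ S.attach.biUnion (fun 𝔭 => (valZ_support_finite (x 𝔭.1 𝔭.2)).toFinset) with hT
  have hST : S ⊆ T := fun ν hν => by
    simp only [hT, Finset.mem_union]; tauto
  have hαT : ∀ ν, valZ ν α ≠ 0 → ν ∈ T := fun ν hν => by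
    simp only [hT, Finset.mem_union, Set.Finite.mem_toFinset, Set.mem_setOf_eq]; tauto
  have hγT : ∀ ν, valZ ν γ ≠ 0 → ν ∈ T := fun ν hν => by
    simp only [hT, Finset.mem_union, Set.Finite.mem_toFinset, Set.mem_setOf_eq]; tauto
  have hxT : ∀ (𝔭 : {p // p ∈ S}) ν, valZ ν (x 𝔭.1 𝔭.2) ≠ 0 → ν ∈ T := fun 𝔭 ν hν => by
    simp only [hT, Finset.mem_union, Finset.mem_biUnion]
    right
    exact ⟨𝔭, Finset.mem_attach _ _, by simpa [Set.Finite.mem_toFinset] using hν⟩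
  -- convert hypothesis (i) applied to γ
  have hNγ : Algebra.norm L (γ : K) = ∏ 𝔮 ∈ T \ S, β 𝔮 ^ valZ 𝔮 γ := by
    rw [h1 γ hγS]
    exact finprod_cond_zpow_eq_prod S T β _ hγT
  -- convert hypothesis (ii)
  have hnx : ∀ 𝔭 : {p // p ∈ S}, Algebra.norm L ((x 𝔭.1 𝔭.2 : Kˣ) : K)
      = β 𝔭.1 * ∏ 𝔮 ∈ T \ S, β 𝔮 ^ valZ 𝔮 (x 𝔭.1 𝔭.2) := by
    intro 𝔭
    have h3 := hx3 𝔭.1 𝔭.2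
    rw [finprod_cond_zpow_eq_prod S T β _
      (fun i hi => hxT 𝔭 i (by simpa using hi))] at h3
    have hmul : (∏ 𝔮 ∈ T \ S, β 𝔮 ^ (-(valZ 𝔮 (x 𝔭.1 𝔭.2))))
        * (∏ 𝔮 ∈ T \ S, β 𝔮 ^ valZ 𝔮 (x 𝔭.1 𝔭.2)) = 1 := by
      rw [← Finset.prod_mul_distrib]
      apply Finset.prod_eq_one
      intro i _
      rw [← zpow_add₀ (hβ i), neg_add_cancel, zpow_zero]
    rw [h3, mul_assoc, hmul, mul_one]
  -- norm of α decomposes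
  have hα : α = γ * w := by rw [hγdef, inv_mul_cancel_right]
  have hNw : Algebra.norm L (w : K)
      = ∏ 𝔭 ∈ S.attach, (Algebra.norm L ((x 𝔭.1 𝔭.2 : Kˣ) : K)) ^ valZ 𝔭.1 α := by
    have h0 : Algebra.norm L (w : K)
        = (Units.coeHom L) ((Units.map (Algebra.norm L : K →* L)) w) := rfl
    rw [h0, hw, map_prod, map_prod]
    exact Finset.prod_congr rfl (fun 𝔭 _ => by
      rw [map_zpow, map_zpow]; rfl)
  have hNα : Algebra.norm L (α : K)
      = Algebra.norm L (γ : K)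
        * ∏ 𝔭 ∈ S.attach, (Algebra.norm L ((x 𝔭.1 𝔭.2 : Kˣ) : K)) ^ valZ 𝔭.1 α := by
    conv_lhs => rw [hα]
    rw [Units.val_mul, map_mul, hNw]
  -- compute the right-hand side of the goal
  rw [finprod_zpow_eq_prod T β _ hαT, ← Finset.prod_sdiff hST, hNα, hNγ]
  -- rewrite the norms of the uniformizers
  have hprod1 : ∏ 𝔭 ∈ S.attach, (Algebra.norm L ((x 𝔭.1 𝔭.2 : Kˣ) : K)) ^ valZ 𝔭.1 α
      = (∏ 𝔭 ∈ S.attach, β 𝔭.1 ^ valZ 𝔭.1 α)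
        * ∏ 𝔭 ∈ S.attach, ∏ 𝔮 ∈ T \ S, β 𝔮 ^ (valZ 𝔮 (x 𝔭.1 𝔭.2) * valZ 𝔭.1 α) := by
    rw [← Finset.prod_mul_distrib]
    refine Finset.prod_congr rfl (fun 𝔭 _ => ?_)
    rw [hnx 𝔭, mul_zpow, prod_zpow₀]
    congr 1
    exact Finset.prod_congr rfl (fun 𝔮 _ => by rw [← zpow_mul])
  have hprod2 : ∏ 𝔭 ∈ S.attach, ∏ 𝔮 ∈ T \ S, β 𝔮 ^ (valZ 𝔮 (x 𝔭.1 𝔭.2) * valZ 𝔭.1 α)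
      = ∏ 𝔮 ∈ T \ S, β 𝔮 ^ (∑ 𝔭 ∈ S.attach, valZ 𝔭.1 α * valZ 𝔮 (x 𝔭.1 𝔭.2)) := by
    rw [Finset.prod_comm]
    refine Finset.prod_congr rfl (fun 𝔮 _ => ?_)
    rw [zpow_sum₀ (hβ 𝔮)]
    exact Finset.prod_congr rfl (fun 𝔭 _ => by rw [mul_comm])
  have hattach : ∏ 𝔭 ∈ S.attach, β 𝔭.1 ^ valZ 𝔭.1 α = ∏ ν ∈ S, β ν ^ valZ ν α :=
    Finset.prod_attach S (fun ν => β ν ^ valZ ν α)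
  rw [hprod1, hprod2, hattach]
  have hkey : (∏ 𝔮 ∈ T \ S, β 𝔮 ^ valZ 𝔮 γ)
      * (∏ 𝔮 ∈ T \ S, β 𝔮 ^ (∑ 𝔭 ∈ S.attach, valZ 𝔭.1 α * valZ 𝔮 (x 𝔭.1 𝔭.2)))
      = ∏ 𝔮 ∈ T \ S, β 𝔮 ^ valZ 𝔮 α := by
    rw [← Finset.prod_mul_distrib]
    refine Finset.prod_congr rfl (fun 𝔮 _ => ?_)
    rw [← zpow_add₀ (hβ 𝔮), hvalγ 𝔮]
    congr 1
    omega
  calc (∏ 𝔮 ∈ T \ S, β 𝔮 ^ valZ 𝔮 γ)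
      * ((∏ ν ∈ S, β ν ^ valZ ν α)
        * ∏ 𝔮 ∈ T \ S, β 𝔮 ^ (∑ 𝔭 ∈ S.attach, valZ 𝔭.1 α * valZ 𝔮 (x 𝔭.1 𝔭.2)))
      = ((∏ 𝔮 ∈ T \ S, β 𝔮 ^ valZ 𝔮 γ)
        * ∏ 𝔮 ∈ T \ S, β 𝔮 ^ (∑ 𝔭 ∈ S.attach, valZ 𝔭.1 α * valZ 𝔮 (x 𝔭.1 𝔭.2)))
        * ∏ ν ∈ S, β ν ^ valZ ν α := by ring
    _ = (∏ 𝔮 ∈ T \ S, β 𝔮 ^ valZ 𝔮 α) * ∏ ν ∈ S, β ν ^ valZ ν α := by rw [hkey]
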